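/- Let K_n be the path algebra of the Kronecker quiver with two vertices 1, 2 and n arrows from vertex 1 to vertex 2, and let S = k × k be its semisimple subalgebra spanned by the vertex idempotents. Then K_n ≅ K_1 ⊗_S^v K_{n−1}, where v is the twisting map v(b ⊗ a) = ε(π'(b))·a ⊗ 1 + 1 ⊗ b·ε'(π(a)) − ε(π'(b)) ⊗ ε'(π(a)) built from the natural augmentations K_1 → S and K_{n−1} → S killing the arrows. -/

import Mathlib

/-- Generators of the path algebra of the two-vertex quiver `Q_{n,m}`:
vertex idempotents `e1, e2`, arrows `c i : 1 → 2` and `b j : 2 → 1`. -/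
inductive QGen (n m : ℕ) : Type
  | e1 | e2 | c (i : Fin n) | b (j : Fin m)

section

variable (k : Type) [Field k] (n m : ℕ)

/-- The generator `e₁` in the free algebra. -/
noncomputable def gE1 : FreeAlgebra k (QGen n m) := FreeAlgebra.ι k QGen.e1

/-- The generator `e₂` in the free algebra. -/
noncomputable def gE2 : FreeAlgebra k (QGen n m) := FreeAlgebra.ι k QGen.e2

/-- The generator `c i` in the free algebra. -/
noncomputable def gC (i : Fin n) : FreeAlgebra k (QGen n m) := FreeAlgebra.ι k (QGen.c i)

/-- The generator `b j` in the free algebra. -/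
noncomputable def gB (j : Fin m) : FreeAlgebra k (QGen n m) := FreeAlgebra.ι k (QGen.b j)

/-- The linear combination `∑ u i • c i` of the arrows `c i`, i.e. the identification of
the coefficient space `k^n` with the span `C` of the arrows `c₁, …, c_n`. -/
noncomputable def glc : (Fin n → k) →ₗ[k] FreeAlgebra k (QGen n m) :=
  ∑ i : Fin n, (LinearMap.toSpanSingleton k _ (gC k n m i)).comp (LinearMap.proj i)

/-- The relations defining `R_F = kQ_{n,m}/I_F`: the path-algebra relations of the
quiver `Q_{n,m}` together with the relations `b c b' = 0`, `w · b j = 0` for `w ∈ W j`,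
and `b j · v = 0` for `v ∈ V j` attached to the family
`F = {V₁, …, V_m; W₁, …, W_m}` of subspaces of `C = k^n`. -/
inductive relF (V W : Fin m → Submodule k (Fin n → k)) :
    FreeAlgebra k (QGen n m) → FreeAlgebra k (QGen n m) → Prop
  | idem1 : relF V W (gE1 k n m * gE1 k n m) (gE1 k n m)
  | idem2 : relF V W (gE2 k n m * gE2 k n m) (gE2 k n m)
  | orth12 : relF V W (gE1 k n m * gE2 k n m) 0
  | orth21 : relF V W (gE2 k n m * gE1 k n m) 0
  | unit : relF V W (gE1 k n m + gE2 k n m) 1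
  | cLeft (i : Fin n) : relF V W (gE2 k n m * gC k n m i) (gC k n m i)
  | cRight (i : Fin n) : relF V W (gC k n m i * gE1 k n m) (gC k n m i)
  | bLeft (j : Fin m) : relF V W (gE1 k n m * gB k n m j) (gB k n m j)
  | bRight (j : Fin m) : relF V W (gB k n m j * gE2 k n m) (gB k n m j)
  | bcb (i : Fin n) (j j' : Fin m) :
      relF V W (gB k n m j * gC k n m i * gB k n m j') 0
  | wb (j : Fin m) (w : Fin n → k) (hw : w ∈ W j) :
      relF V W (glc k n m w * gB k n m j) 0
  | bv (j : Fin m) (v : Fin n → k) (hv : v ∈ V j) :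
      relF V W (gB k n m j * glc k n m v) 0

/-- The algebra `R_F = kQ_{n,m}/I_F`. -/
abbrev RF (V W : Fin m → Submodule k (Fin n → k)) := RingQuot (relF k n m V W)

variable (V W : Fin m → Submodule k (Fin n → k))

/-- The projection from the free algebra onto `R_F`. -/
noncomputable def prF : FreeAlgebra k (QGen n m) →ₐ[k] RF k n m V W :=
  RingQuot.mkAlgHom k _

/-- The idempotent `e₁` of `R_F`. -/
noncomputable def qE1 : RF k n m V W := prF k n m V W (gE1 k n m)

/-- The idempotent `e₂` of `R_F`. -/
noncomputable def qE2 : RF k n m V W := prF k n m V W (gE2 k n m)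

/-- The arrow `c i` of `R_F`. -/
noncomputable def qC (i : Fin n) : RF k n m V W := prF k n m V W (gC k n m i)

/-- The arrow `b j` of `R_F`. -/
noncomputable def qB (j : Fin m) : RF k n m V W := prF k n m V W (gB k n m j)

/-- The identification of `k^n` with the span `C ⊆ R_F` of the arrows `c i`. -/
noncomputable def qlc : (Fin n → k) →ₗ[k] RF k n m V W :=
  (prF k n m V W).toLinearMap.comp (glc k n m)

/-- Left multiplication by `x` as an endomorphism of `R_F` viewed as a right module
over itself; its range is the right ideal `x·R_F` and its kernel is the right
annihilator `rAnn(x)`. -/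
noncomputable def rmul (x : RF k n m V W) :
    RF k n m V W →ₗ[(RF k n m V W)ᵐᵒᵖ] RF k n m V W where
  toFun y := x * y
  map_add' := mul_add x
  map_smul' r y := by
    simp only [RingHom.id_apply, MulOpposite.smul_eq_mul_unop]
    rw [mul_assoc]

end

open TensorProduct

/-- The empty family of subspaces (no `b`-arrows, no relations). -/
def emptyFam (k : Type) [Field k] (n : ℕ) : Fin 0 → Submodule k (Fin n → k) :=
  fun i => i.elim0

/-- The Kronecker algebra `K_n`: the path algebra of the quiver with two vertices and
`n` arrows `c₁, …, c_n` from vertex 1 to vertex 2 (the case `m = 0` of `R_F`, with no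
relations beyond the path-algebra ones). -/
abbrev Kron (k : Type) [Field k] (n : ℕ) := RF k n 0 (emptyFam k n) (emptyFam k n)

/-- The structure map `ε : S = k × k → K_n`, `(s₁, s₂) ↦ s₁ e₁ + s₂ e₂`, of the
semisimple subalgebra spanned by the vertex idempotents. -/
noncomputable def epsS (k : Type) [Field k] (n : ℕ) (s : k × k) : Kron k n :=
  s.1 • qE1 k n 0 (emptyFam k n) (emptyFam k n) + s.2 • qE2 k n 0 (emptyFam k n) (emptyFam k n)

/-- The submodule of balancing relations defining the tensor product
`K₁ ⊗_S K_{n-1}` over `S = k × k` inside `K₁ ⊗ₖ K_{n-1}`. -/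
noncomputable def balK (k : Type) [Field k] (n : ℕ) :
    Submodule k (Kron k 1 ⊗[k] Kron k (n - 1)) :=
  Submodule.span k
    {z | ∃ (s : k × k) (a : Kron k 1) (b : Kron k (n - 1)),
      z = (a * epsS k 1 s) ⊗ₜ[k] b - a ⊗ₜ[k] (epsS k (n - 1) s * b)}

/-- The `S`-bimodule `K₁ ⊗_S K_{n-1}`, underlying the twisted tensor product
`K₁ ⊗_S^v K_{n-1}`. -/
abbrev TKron (k : Type) [Field k] (n : ℕ) :=
  @HasQuotient.Quotient _ _ (@Submodule.hasQuotient k _ _ TensorProduct.addCommGroup _) (balK k n)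

/-- The class of the pure tensor `a ⊗ b` in `K₁ ⊗_S K_{n-1}`. -/
noncomputable def qK (k : Type) [Field k] (n : ℕ) (a : Kron k 1) (b : Kron k (n - 1)) :
    TKron k n :=
  Submodule.Quotient.mk (a ⊗ₜ[k] b)


namespace Stmt8Aux

variable (k : Type) [Field k] (N : ℕ)

@[reducible] noncomputable def instRingKron : Ring (Kron k N) := RingQuot.instRing _

attribute [local instance] instRingKron

noncomputable def KE1 : Kron k N := qE1 k N 0 (emptyFam k N) (emptyFam k N)
noncomputable def KE2 : Kron k N := qE2 k N 0 (emptyFam k N) (emptyFam k N)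
noncomputable def KC (i : Fin N) : Kron k N := qC k N 0 (emptyFam k N) (emptyFam k N) i

lemma E1_mul_E1 : KE1 k N * KE1 k N = KE1 k N := by
  rw [KE1, qE1, ← map_mul]; exact RingQuot.mkAlgHom_rel k relF.idem1

lemma E2_mul_E2 : KE2 k N * KE2 k N = KE2 k N := by
  rw [KE2, qE2, ← map_mul]; exact RingQuot.mkAlgHom_rel k relF.idem2

lemma E1_mul_E2 : KE1 k N * KE2 k N = 0 := by
  rw [KE1, KE2, qE1, qE2, ← map_mul]
  rw [show (0 : Kron k N) = prF k N 0 (emptyFam k N) (emptyFam k N) 0 from (map_zero _).symm]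
  exact RingQuot.mkAlgHom_rel k relF.orth12

lemma E2_mul_E1 : KE2 k N * KE1 k N = 0 := by
  rw [KE1, KE2, qE1, qE2, ← map_mul]
  rw [show (0 : Kron k N) = prF k N 0 (emptyFam k N) (emptyFam k N) 0 from (map_zero _).symm]
  exact RingQuot.mkAlgHom_rel k relF.orth21

lemma E1_add_E2 : KE1 k N + KE2 k N = 1 := by
  rw [KE1, KE2, qE1, qE2, ← map_add]
  rw [show (1 : Kron k N) = prF k N 0 (emptyFam k N) (emptyFam k N) 1 from (map_one _).symm]
  exact RingQuot.mkAlgHom_rel k relF.unit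

lemma E2_mul_C (i : Fin N) : KE2 k N * KC k N i = KC k N i := by
  rw [KE2, KC, qE2, qC, ← map_mul]; exact RingQuot.mkAlgHom_rel k (relF.cLeft i)

lemma C_mul_E1 (i : Fin N) : KC k N i * KE1 k N = KC k N i := by
  rw [KE1, KC, qE1, qC, ← map_mul]; exact RingQuot.mkAlgHom_rel k (relF.cRight i)

lemma E1_mul_C (i : Fin N) : KE1 k N * KC k N i = 0 := by
  rw [← E2_mul_C k N i, ← mul_assoc, E1_mul_E2, zero_mul]

lemma C_mul_E2 (i : Fin N) : KC k N i * KE2 k N = 0 := by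
  rw [← C_mul_E1 k N i, mul_assoc, E1_mul_E2, mul_zero]

lemma C_mul_C (i j : Fin N) : KC k N i * KC k N j = 0 := by
  rw [← C_mul_E1 k N i, mul_assoc, E1_mul_C, mul_zero]

/-- `ν : S → K_N` as a linear map. -/
noncomputable def nu : (k × k) →ₗ[k] Kron k N where
  toFun s := s.1 • KE1 k N + s.2 • KE2 k N
  map_add' s t := by simp only [Prod.fst_add, Prod.snd_add, add_smul]; abel
  map_smul' r s := by
    simp only [Prod.smul_fst, Prod.smul_snd, smul_eq_mul, RingHom.id_apply, smul_add, smul_smul]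

lemma nu_apply (s : k × k) : nu k N s = s.1 • KE1 k N + s.2 • KE2 k N := rfl

lemma epsS_eq_nu (s : k × k) : epsS k N s = nu k N s := rfl

lemma nu_one : nu k N 1 = 1 := by
  rw [nu_apply]
  simp only [Prod.fst_one, Prod.snd_one, one_smul]
  exact E1_add_E2 k N

lemma nu_mul (s t : k × k) : nu k N s * nu k N t = nu k N (s * t) := by
  rw [nu_apply, nu_apply, nu_apply]
  simp only [Prod.fst_mul, Prod.snd_mul, add_mul, mul_add, smul_mul_assoc, mul_smul_comm,
    E1_mul_E1, E2_mul_E2, E1_mul_E2, E2_mul_E1, smul_zero, smul_smul, zero_add, add_zero]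
  rw [mul_comm t.1 s.1, mul_comm t.2 s.2]

lemma nu_mul_E1 (s : k × k) : nu k N s * KE1 k N = s.1 • KE1 k N := by
  rw [nu_apply, add_mul, smul_mul_assoc, smul_mul_assoc, E1_mul_E1, E2_mul_E1, smul_zero, add_zero]

lemma E1_mul_nu (s : k × k) : KE1 k N * nu k N s = s.1 • KE1 k N := by
  rw [nu_apply, mul_add, mul_smul_comm, mul_smul_comm, E1_mul_E1, E1_mul_E2, smul_zero, add_zero]

lemma nu_mul_E2 (s : k × k) : nu k N s * KE2 k N = s.2 • KE2 k N := by
  rw [nu_apply, add_mul, smul_mul_assoc, smul_mul_assoc, E2_mul_E2, E1_mul_E2, smul_zero, zero_add]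

lemma E2_mul_nu (s : k × k) : KE2 k N * nu k N s = s.2 • KE2 k N := by
  rw [nu_apply, mul_add, mul_smul_comm, mul_smul_comm, E2_mul_E2, E2_mul_E1, smul_zero, zero_add]

lemma nu_mul_C (s : k × k) (i : Fin N) : nu k N s * KC k N i = s.2 • KC k N i := by
  rw [nu_apply, add_mul, smul_mul_assoc, smul_mul_assoc, E1_mul_C, E2_mul_C, smul_zero, zero_add]

lemma C_mul_nu (s : k × k) (i : Fin N) : KC k N i * nu k N s = s.1 • KC k N i := by
  rw [nu_apply, mul_add, mul_smul_comm, mul_smul_comm, C_mul_E1, C_mul_E2, smul_zero, add_zero]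

end Stmt8Aux


namespace Stmt8Aux

attribute [local instance] instRingKron

variable (k : Type) [Field k] (N : ℕ)

def genSet : Set (Kron k N) := insert (KE1 k N) (insert (KE2 k N) (Set.range (KC k N)))

lemma mem_genSet_iff (x : Kron k N) :
    x ∈ genSet k N ↔ x = KE1 k N ∨ x = KE2 k N ∨ ∃ i, x = KC k N i := by
  simp [genSet, Set.mem_insert_iff, Set.mem_range, eq_comm]

lemma E1_mem : KE1 k N ∈ genSet k N := Set.mem_insert _ _
lemma E2_mem : KE2 k N ∈ genSet k N := Set.mem_insert_of_mem _ (Set.mem_insert _ _)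
lemma C_mem (i : Fin N) : KC k N i ∈ genSet k N :=
  Set.mem_insert_of_mem _ (Set.mem_insert_of_mem _ ⟨i, rfl⟩)

lemma span_genSet_top : Submodule.span k (genSet k N) = ⊤ := by
  have hgen : ∀ g1 ∈ genSet k N, ∀ g2 ∈ genSet k N,
      g1 * g2 ∈ Submodule.span k (genSet k N) := by
    intro g1 h1 g2 h2
    rw [mem_genSet_iff] at h1 h2
    rcases h1 with rfl | rfl | ⟨i, rfl⟩ <;> rcases h2 with rfl | rfl | ⟨j, rfl⟩
    · rw [E1_mul_E1]; exact Submodule.subset_span (E1_mem k N)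
    · rw [E1_mul_E2]; exact zero_mem _
    · rw [E1_mul_C]; exact zero_mem _
    · rw [E2_mul_E1]; exact zero_mem _
    · rw [E2_mul_E2]; exact Submodule.subset_span (E2_mem k N)
    · rw [E2_mul_C]; exact Submodule.subset_span (C_mem k N j)
    · rw [C_mul_E1]; exact Submodule.subset_span (C_mem k N i)
    · rw [C_mul_E2]; exact zero_mem _
    · rw [C_mul_C]; exact zero_mem _
  have hmul : ∀ x ∈ Submodule.span k (genSet k N), ∀ y ∈ Submodule.span k (genSet k N),
      x * y ∈ Submodule.span k (genSet k N) := by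
    intro x hx
    induction hx using Submodule.span_induction with
    | mem g hg =>
      intro y hy
      induction hy using Submodule.span_induction with
      | mem g2 hg2 => exact hgen g hg g2 hg2
      | zero => rw [mul_zero]; exact zero_mem _
      | add y1 y2 _ _ ih1 ih2 => rw [mul_add]; exact add_mem ih1 ih2
      | smul c y _ ih => rw [mul_smul_comm]; exact Submodule.smul_mem _ _ ih
    | zero => intro y _; rw [zero_mul]; exact zero_mem _
    | add x1 x2 _ _ ih1 ih2 => intro y hy; rw [add_mul]; exact add_mem (ih1 y hy) (ih2 y hy)
    | smul c x _ ih => intro y hy; rw [smul_mul_assoc]; exact Submodule.smul_mem _ _ (ih y hy)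
  have hone : (1 : Kron k N) ∈ Submodule.span k (genSet k N) := by
    rw [← E1_add_E2]
    exact add_mem (Submodule.subset_span (E1_mem k N)) (Submodule.subset_span (E2_mem k N))
  rw [eq_top_iff]
  rintro x -
  obtain ⟨y, rfl⟩ := RingQuot.mkAlgHom_surjective k _ x
  induction y using FreeAlgebra.induction with
  | grade0 r =>
    rw [AlgHom.commutes, Algebra.algebraMap_eq_smul_one]
    exact Submodule.smul_mem _ _ hone
  | grade1 g =>
    cases g with
    | e1 => exact Submodule.subset_span (E1_mem k N)
    | e2 => exact Submodule.subset_span (E2_mem k N)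
    | c i => exact Submodule.subset_span (C_mem k N i)
    | b j => exact j.elim0
  | mul x y ihx ihy => rw [map_mul]; exact hmul _ ihx _ ihy
  | add x y ihx ihy => rw [map_add]; exact add_mem ihx ihy

end Stmt8Aux


namespace Stmt8Aux

attribute [local instance] instRingKron

variable (k : Type) [Field k] (N : ℕ)

/-- Single-entry matrix. -/
noncomputable def mE (r c : Fin (N+1)) : Matrix (Fin (N+1)) (Fin (N+1)) k :=
  Matrix.single r c 1

lemma mE_mul_mE (r c c' : Fin (N+1)) : mE k N r c * mE k N c c' = mE k N r c' := by
  rw [mE, mE, mE, Matrix.single_mul_single_same, mul_one]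

lemma mE_mul_mE_ne (r c d c' : Fin (N+1)) (h : c ≠ d) : mE k N r c * mE k N d c' = 0 := by
  rw [mE, mE]
  exact Matrix.single_mul_single_of_ne 1 r c d h 1

noncomputable def repGen : QGen N 0 → Matrix (Fin (N+1)) (Fin (N+1)) k
  | .e1 => mE k N 0 0
  | .e2 => 1 - mE k N 0 0
  | .c i => mE k N i.succ 0
  | .b j => j.elim0

lemma repRel : ∀ ⦃x y : FreeAlgebra k (QGen N 0)⦄, relF k N 0 (emptyFam k N) (emptyFam k N) x y →
    FreeAlgebra.lift k (repGen k N) x = FreeAlgebra.lift k (repGen k N) y := by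
  have hEE := mE_mul_mE k N 0 0 0
  intro x y h
  cases h with
  | idem1 => simp only [gE1, map_mul, FreeAlgebra.lift_ι_apply, repGen, hEE]
  | idem2 =>
    simp only [gE2, map_mul, FreeAlgebra.lift_ι_apply, repGen]
    simp only [sub_mul, mul_sub, one_mul, mul_one, hEE]
    abel
  | orth12 =>
    simp only [gE1, gE2, map_mul, FreeAlgebra.lift_ι_apply, repGen, map_zero]
    rw [mul_sub, mul_one, hEE, sub_self]
  | orth21 =>
    simp only [gE1, gE2, map_mul, FreeAlgebra.lift_ι_apply, repGen, map_zero]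
    rw [sub_mul, one_mul, hEE, sub_self]
  | unit =>
    simp only [gE1, gE2, map_add, FreeAlgebra.lift_ι_apply, repGen, map_one]
    abel
  | cLeft i =>
    simp only [gE2, gC, map_mul, FreeAlgebra.lift_ι_apply, repGen]
    rw [sub_mul, one_mul, mE_mul_mE_ne k N 0 0 i.succ 0 (Fin.succ_ne_zero i).symm, sub_zero]
  | cRight i =>
    simp only [gE1, gC, map_mul, FreeAlgebra.lift_ι_apply, repGen, mE_mul_mE]
  | bLeft j => exact j.elim0
  | bRight j => exact j.elim0
  | bcb i j j' => exact j.elim0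
  | wb j w hw => exact j.elim0
  | bv j v hv => exact j.elim0

noncomputable def rep : Kron k N →ₐ[k] Matrix (Fin (N+1)) (Fin (N+1)) k :=
  RingQuot.liftAlgHom k ⟨FreeAlgebra.lift k (repGen k N), repRel k N⟩

lemma rep_E1 : rep k N (KE1 k N) = mE k N 0 0 := by
  rw [KE1, qE1, prF, rep, RingQuot.liftAlgHom_mkAlgHom_apply, gE1, FreeAlgebra.lift_ι_apply,
    repGen]

lemma rep_E2 : rep k N (KE2 k N) = 1 - mE k N 0 0 := by
  rw [KE2, qE2, prF, rep, RingQuot.liftAlgHom_mkAlgHom_apply, gE2, FreeAlgebra.lift_ι_apply,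
    repGen]

lemma rep_C (i : Fin N) : rep k N (KC k N i) = mE k N i.succ 0 := by
  rw [KC, qC, prF, rep, RingQuot.liftAlgHom_mkAlgHom_apply, gC, FreeAlgebra.lift_ι_apply,
    repGen]

lemma mE_apply (r c r' c' : Fin (N+1)) :
    mE k N r c r' c' = if r = r' ∧ c = c' then 1 else 0 := rfl

lemma mE_same (r c : Fin (N+1)) : mE k N r c r c = 1 := if_pos ⟨rfl, rfl⟩

lemma mE_row_ne {r r' : Fin (N+1)} (h : r ≠ r') (c c' : Fin (N+1)) : mE k N r c r' c' = 0 :=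
  if_neg (fun hc => h hc.1)

lemma mE_col_ne (r r' : Fin (N+1)) {c c' : Fin (N+1)} (h : c ≠ c') : mE k N r c r' c' = 0 :=
  if_neg (fun hc => h hc.2)

lemma indep (M : ℕ) (x1 x2 : k) (y : Fin (M+1) → k)
    (h : x1 • KE1 k (M+1) + x2 • KE2 k (M+1) + ∑ i, y i • KC k (M+1) i = 0) :
    x1 = 0 ∧ x2 = 0 ∧ ∀ i, y i = 0 := by
  have h' := congrArg (rep k (M+1)) h
  simp only [map_add, map_smul, map_sum, map_zero, rep_E1, rep_E2, rep_C] at h'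
  have entry : ∀ r c : Fin (M+2),
      x1 • mE k (M+1) 0 0 r c + x2 • ((1 : Matrix (Fin (M+2)) (Fin (M+2)) k) - mE k (M+1) 0 0) r c
        + ∑ i, y i • mE k (M+1) i.succ 0 r c = 0 := by
    intro r c
    have := congrFun (congrFun h' r) c
    simpa [Matrix.add_apply, Matrix.sum_apply] using this
  have h1 : x1 = 0 := by
    have := entry 0 0
    rw [Finset.sum_eq_zero (fun i _ => by
      rw [mE_row_ne k (M+1) (Fin.succ_ne_zero i) 0 0, smul_zero])] at this
    simp only [mE_same, Matrix.sub_apply, Matrix.one_apply_eq, sub_self, smul_eq_mul,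
      mul_one, mul_zero, add_zero] at this
    exact this
  subst h1
  have h01 : (0 : Fin (M+2)) ≠ 1 := by simp [Fin.ext_iff]
  have h2 : x2 = 0 := by
    have := entry 1 1
    rw [Finset.sum_eq_zero (fun i _ => by
      rw [mE_col_ne k (M+1) i.succ 1 h01, smul_zero])] at this
    simp only [mE_row_ne k (M+1) h01, Matrix.sub_apply, Matrix.one_apply_eq, sub_zero,
      smul_eq_mul, mul_one, zero_smul, zero_add, add_zero] at this
    simpa using this
  subst h2
  refine ⟨rfl, rfl, fun i => ?_⟩
  have := entry i.succ 0
  rw [Finset.sum_eq_single i (fun j _ hj => by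
      rw [mE_row_ne k (M+1) (fun hc => hj (Fin.succ_injective _ hc)) 0 0, smul_zero])
    (fun hi => absurd (Finset.mem_univ i) hi)] at this
  rw [mE_same] at this
  simpa using this

end Stmt8Aux


namespace Stmt8Aux

attribute [local instance] instRingKron

variable (k : Type) [Field k] (N m : ℕ)

lemma eps10 : epsS k N (1, 0) = KE1 k N := by
  rw [epsS_eq_nu, nu_apply]; simp

lemma eps01 : epsS k N (0, 1) = KE2 k N := by
  rw [epsS_eq_nu, nu_apply]; simp

noncomputable def fGen : QGen 1 0 → Kron k (m+1)
  | .e1 => KE1 k (m+1)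
  | .e2 => KE2 k (m+1)
  | .c _ => KC k (m+1) 0
  | .b j => j.elim0

lemma fRel : ∀ ⦃x y : FreeAlgebra k (QGen 1 0)⦄, relF k 1 0 (emptyFam k 1) (emptyFam k 1) x y →
    FreeAlgebra.lift k (fGen k m) x = FreeAlgebra.lift k (fGen k m) y := by
  intro x y h
  cases h with
  | idem1 => simp only [gE1, map_mul, FreeAlgebra.lift_ι_apply, fGen, E1_mul_E1]
  | idem2 => simp only [gE2, map_mul, FreeAlgebra.lift_ι_apply, fGen, E2_mul_E2]
  | orth12 => simp only [gE1, gE2, map_mul, FreeAlgebra.lift_ι_apply, fGen, E1_mul_E2, map_zero]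
  | orth21 => simp only [gE1, gE2, map_mul, FreeAlgebra.lift_ι_apply, fGen, E2_mul_E1, map_zero]
  | unit => simp only [gE1, gE2, map_add, FreeAlgebra.lift_ι_apply, fGen, E1_add_E2, map_one]
  | cLeft i => simp only [gE2, gC, map_mul, FreeAlgebra.lift_ι_apply, fGen, E2_mul_C]
  | cRight i => simp only [gE1, gC, map_mul, FreeAlgebra.lift_ι_apply, fGen, C_mul_E1]
  | bLeft j => exact j.elim0
  | bRight j => exact j.elim0
  | bcb i j j' => exact j.elim0
  | wb j w hw => exact j.elim0
  | bv j v hv => exact j.elim0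

noncomputable def fA : Kron k 1 →ₐ[k] Kron k (m+1) :=
  RingQuot.liftAlgHom k ⟨FreeAlgebra.lift k (fGen k m), fRel k m⟩

lemma fA_E1 : fA k m (KE1 k 1) = KE1 k (m+1) := by
  rw [KE1, qE1, prF, fA, RingQuot.liftAlgHom_mkAlgHom_apply, gE1, FreeAlgebra.lift_ι_apply, fGen]

lemma fA_E2 : fA k m (KE2 k 1) = KE2 k (m+1) := by
  rw [KE2, qE2, prF, fA, RingQuot.liftAlgHom_mkAlgHom_apply, gE2, FreeAlgebra.lift_ι_apply, fGen]

lemma fA_C (i : Fin 1) : fA k m (KC k 1 i) = KC k (m+1) 0 := by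
  rw [KC, qC, prF, fA, RingQuot.liftAlgHom_mkAlgHom_apply, gC, FreeAlgebra.lift_ι_apply, fGen]

noncomputable def gGen : QGen m 0 → Kron k (m+1)
  | .e1 => KE1 k (m+1)
  | .e2 => KE2 k (m+1)
  | .c i => KC k (m+1) i.succ
  | .b j => j.elim0

lemma gRel : ∀ ⦃x y : FreeAlgebra k (QGen m 0)⦄, relF k m 0 (emptyFam k m) (emptyFam k m) x y →
    FreeAlgebra.lift k (gGen k m) x = FreeAlgebra.lift k (gGen k m) y := by
  intro x y h
  cases h with
  | idem1 => simp only [gE1, map_mul, FreeAlgebra.lift_ι_apply, gGen, E1_mul_E1]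
  | idem2 => simp only [gE2, map_mul, FreeAlgebra.lift_ι_apply, gGen, E2_mul_E2]
  | orth12 => simp only [gE1, gE2, map_mul, FreeAlgebra.lift_ι_apply, gGen, E1_mul_E2, map_zero]
  | orth21 => simp only [gE1, gE2, map_mul, FreeAlgebra.lift_ι_apply, gGen, E2_mul_E1, map_zero]
  | unit => simp only [gE1, gE2, map_add, FreeAlgebra.lift_ι_apply, gGen, E1_add_E2, map_one]
  | cLeft i => simp only [gE2, gC, map_mul, FreeAlgebra.lift_ι_apply, gGen, E2_mul_C]
  | cRight i => simp only [gE1, gC, map_mul, FreeAlgebra.lift_ι_apply, gGen, C_mul_E1]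
  | bLeft j => exact j.elim0
  | bRight j => exact j.elim0
  | bcb i j j' => exact j.elim0
  | wb j w hw => exact j.elim0
  | bv j v hv => exact j.elim0

noncomputable def gA : Kron k m →ₐ[k] Kron k (m+1) :=
  RingQuot.liftAlgHom k ⟨FreeAlgebra.lift k (gGen k m), gRel k m⟩

lemma gA_E1 : gA k m (KE1 k m) = KE1 k (m+1) := by
  rw [KE1, qE1, prF, gA, RingQuot.liftAlgHom_mkAlgHom_apply, gE1, FreeAlgebra.lift_ι_apply, gGen]

lemma gA_E2 : gA k m (KE2 k m) = KE2 k (m+1) := by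
  rw [KE2, qE2, prF, gA, RingQuot.liftAlgHom_mkAlgHom_apply, gE2, FreeAlgebra.lift_ι_apply, gGen]

lemma gA_C (i : Fin m) : gA k m (KC k m i) = KC k (m+1) i.succ := by
  rw [KC, qC, prF, gA, RingQuot.liftAlgHom_mkAlgHom_apply, gC, FreeAlgebra.lift_ι_apply, gGen]

lemma fA_eps (s : k × k) : fA k m (epsS k 1 s) = nu k (m+1) s := by
  rw [epsS_eq_nu, nu_apply, map_add, map_smul, map_smul, fA_E1, fA_E2, nu_apply]

lemma gA_eps (s : k × k) : gA k m (epsS k m s) = nu k (m+1) s := by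
  rw [epsS_eq_nu, nu_apply, map_add, map_smul, map_smul, gA_E1, gA_E2, nu_apply]

/-- Clean version of the balancing submodule, with index `m` instead of `m+1-1`. -/
noncomputable def balC : Submodule k (Kron k 1 ⊗[k] Kron k m) :=
  Submodule.span k
    {z | ∃ (s : k × k) (a : Kron k 1) (b : Kron k m),
      z = (a * epsS k 1 s) ⊗ₜ[k] b - a ⊗ₜ[k] (epsS k m s * b)}

/-- Clean version of `TKron`. -/
abbrev TC :=
  @HasQuotient.Quotient _ _ (@Submodule.hasQuotient k _ _ TensorProduct.addCommGroup _) (balC k m)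

/-- Clean version of `qK`. -/
noncomputable def qT (a : Kron k 1) (b : Kron k m) : TC k m :=
  Submodule.Quotient.mk (a ⊗ₜ[k] b)

noncomputable def psiBil : Kron k 1 →ₗ[k] Kron k m →ₗ[k] Kron k (m+1) :=
  (LinearMap.mul k (Kron k (m+1))).compl₁₂ (fA k m).toLinearMap (gA k m).toLinearMap

lemma psiBil_apply (a : Kron k 1) (b : Kron k m) :
    psiBil k m a b = fA k m a * gA k m b := rfl

noncomputable def psiPre : (Kron k 1 ⊗[k] Kron k m) →ₗ[k] Kron k (m+1) :=
  TensorProduct.lift (psiBil k m)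

lemma bal_le : balC k m ≤ LinearMap.ker (psiPre k m) := by
  rw [balC, Submodule.span_le]
  rintro z ⟨s, a, b, rfl⟩
  simp only [SetLike.mem_coe, LinearMap.mem_ker, map_sub, psiPre, TensorProduct.lift.tmul,
    psiBil_apply, map_mul, fA_eps, gA_eps]
  rw [mul_assoc]
  exact sub_self _

noncomputable def psi : TC k m →ₗ[k] Kron k (m+1) :=
  Submodule.liftQ (balC k m) (psiPre k m) (bal_le k m)

lemma psi_qK (a : Kron k 1) (b : Kron k m) :
    psi k m (qT k m a b) = fA k m a * gA k m b := by
  rw [qT, psi, Submodule.liftQ_apply, psiPre, TensorProduct.lift.tmul, psiBil_apply]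

lemma qT_add_left (a a' : Kron k 1) (b : Kron k m) :
    qT k m (a + a') b = qT k m a b + qT k m a' b := by
  rw [qT, qT, qT, TensorProduct.add_tmul, Submodule.Quotient.mk_add]

lemma qT_add_right (a : Kron k 1) (b b' : Kron k m) :
    qT k m a (b + b') = qT k m a b + qT k m a b' := by
  rw [qT, qT, qT, TensorProduct.tmul_add, Submodule.Quotient.mk_add]

lemma qT_smul_left (r : k) (a : Kron k 1) (b : Kron k m) :
    qT k m (r • a) b = r • qT k m a b := by
  rw [qT, qT, ← TensorProduct.smul_tmul', Submodule.Quotient.mk_smul]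

lemma qT_smul_right (r : k) (a : Kron k 1) (b : Kron k m) :
    qT k m a (r • b) = r • qT k m a b := by
  rw [qT, qT, TensorProduct.tmul_smul, Submodule.Quotient.mk_smul]

lemma qT_zero_left (b : Kron k m) : qT k m 0 b = 0 := by
  rw [qT, TensorProduct.zero_tmul, Submodule.Quotient.mk_zero]

lemma qT_zero_right (a : Kron k 1) : qT k m a 0 = 0 := by
  rw [qT, TensorProduct.tmul_zero, Submodule.Quotient.mk_zero]

lemma qT_bal (s : k × k) (a : Kron k 1) (b : Kron k m) :
    qT k m (a * epsS k 1 s) b = qT k m a (epsS k m s * b) := by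
  rw [qT, qT, Submodule.Quotient.eq]
  exact Submodule.subset_span ⟨s, a, b, rfl⟩

lemma qT_E1_E2 : qT k m (KE1 k 1) (KE2 k m) = 0 := by
  have := qT_bal k m (0, 1) (KE1 k 1) (KE2 k m)
  rw [eps01, eps01, E1_mul_E2, E2_mul_E2, qT_zero_left] at this
  exact this.symm

lemma qT_E2_E1 : qT k m (KE2 k 1) (KE1 k m) = 0 := by
  have := qT_bal k m (1, 0) (KE2 k 1) (KE1 k m)
  rw [eps10, eps10, E2_mul_E1, E1_mul_E1, qT_zero_left] at this
  exact this.symm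

lemma qT_C_E2 (i : Fin 1) : qT k m (KC k 1 i) (KE2 k m) = 0 := by
  have := qT_bal k m (0, 1) (KC k 1 i) (KE2 k m)
  rw [eps01, eps01, C_mul_E2, E2_mul_E2, qT_zero_left] at this
  exact this.symm

lemma qT_E1_C (j : Fin m) : qT k m (KE1 k 1) (KC k m j) = 0 := by
  have := qT_bal k m (0, 1) (KE1 k 1) (KC k m j)
  rw [eps01, eps01, E1_mul_E2, E2_mul_C, qT_zero_left] at this
  exact this.symm

lemma qT_C_C (i : Fin 1) (j : Fin m) : qT k m (KC k 1 i) (KC k m j) = 0 := by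
  have := qT_bal k m (0, 1) (KC k 1 i) (KC k m j)
  rw [eps01, eps01, C_mul_E2, E2_mul_C, qT_zero_left] at this
  exact this.symm

end Stmt8Aux


namespace Stmt8Aux

attribute [local instance] instRingKron

variable (k : Type) [Field k] (N m : ℕ)

lemma nu10 : nu k N (1, 0) = KE1 k N := by rw [← epsS_eq_nu, eps10]
lemma nu01 : nu k N (0, 1) = KE2 k N := by rw [← epsS_eq_nu, eps01]

section Comm

variable (πA : Kron k 1 →ₐ[k] (k × k)) (πB : Kron k m →ₐ[k] (k × k))

lemma comm
    (hπA1 : πA (KE1 k 1) = (1, 0)) (hπA2 : πA (KE2 k 1) = (0, 1))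
    (hπA3 : ∀ i, πA (KC k 1 i) = 0)
    (hπB1 : πB (KE1 k m) = (1, 0)) (hπB2 : πB (KE2 k m) = (0, 1))
    (hπB3 : ∀ i, πB (KC k m i) = 0)
    (b : Kron k m) (a : Kron k 1) :
    gA k m b * fA k m a
      = nu k (m+1) (πB b) * fA k m a + gA k m b * nu k (m+1) (πA a)
        - nu k (m+1) (πB b) * nu k (m+1) (πA a) := by
  set M := LinearMap.mul k (Kron k (m+1)) with hM
  set nB : Kron k m →ₗ[k] Kron k (m+1) := (nu k (m+1)).comp πB.toLinearMap with hnB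
  set nA : Kron k 1 →ₗ[k] Kron k (m+1) := (nu k (m+1)).comp πA.toLinearMap with hnA
  have key : M.compl₁₂ (gA k m).toLinearMap (fA k m).toLinearMap
      = M.compl₁₂ nB (fA k m).toLinearMap + M.compl₁₂ (gA k m).toLinearMap nA
        - M.compl₁₂ nB nA := by
    apply LinearMap.ext_on (span_genSet_top k m)
    intro x hx
    apply LinearMap.ext_on (span_genSet_top k 1)
    intro y hy
    rw [mem_genSet_iff] at hx hy
    have hπB0 : ∀ i, nu k (m+1) (πB (KC k m i)) = 0 := fun i => by rw [hπB3, map_zero]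
    have hπA0 : ∀ i, nu k (m+1) (πA (KC k 1 i)) = 0 := fun i => by rw [hπA3, map_zero]
    rcases hx with rfl | rfl | ⟨j, rfl⟩ <;> rcases hy with rfl | rfl | ⟨i, rfl⟩ <;>
      simp only [hM, hnB, hnA, LinearMap.add_apply, LinearMap.sub_apply,
        LinearMap.compl₁₂_apply, LinearMap.mul_apply', LinearMap.coe_comp,
        Function.comp_apply, AlgHom.toLinearMap_apply,
        gA_E1, gA_E2, gA_C, fA_E1, fA_E2, fA_C,
        hπA1, hπA2, hπB1, hπB2, hπB0, hπA0, nu10, nu01,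
        E1_mul_E1, E1_mul_E2, E2_mul_E1, E2_mul_E2, E1_mul_C, E2_mul_C,
        C_mul_E1, C_mul_E2, C_mul_C, zero_mul, mul_zero,
        add_zero, zero_add, sub_zero, zero_sub, sub_self] <;>
      abel
  have := congrFun (congrArg (fun F => (DFunLike.coe F : Kron k m → _)) key) b
  have h2 := congrFun (congrArg (fun F => (DFunLike.coe F : Kron k 1 → _)) this) a
  simpa only [hM, hnB, hnA, LinearMap.add_apply, LinearMap.sub_apply,
    LinearMap.compl₁₂_apply, LinearMap.mul_apply', LinearMap.coe_comp,
    Function.comp_apply, AlgHom.toLinearMap_apply] using h2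

end Comm

lemma spanTC_top :
    Submodule.span k {z : TC k m | ∃ a b, z = qT k m a b} = ⊤ := by
  rw [eq_top_iff]
  rintro z -
  obtain ⟨t, rfl⟩ := Submodule.Quotient.mk_surjective (balC k m) z
  have ht : t ∈ Submodule.span k {t : Kron k 1 ⊗[k] Kron k m | ∃ x y, x ⊗ₜ[k] y = t} := by
    rw [TensorProduct.span_tmul_eq_top]; trivial
  induction ht using Submodule.span_induction with
  | mem t h =>
    obtain ⟨x, y, rfl⟩ := h
    exact Submodule.subset_span ⟨x, y, rfl⟩
  | zero => rw [Submodule.Quotient.mk_zero]; exact zero_mem _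
  | add x y _ _ ihx ihy => rw [Submodule.Quotient.mk_add]; exact add_mem ihx ihy
  | smul c x _ ihx => rw [Submodule.Quotient.mk_smul]; exact Submodule.smul_mem _ _ ihx

/-- The four-element spanning family of `TC`. -/
def T4set : Set (TC k m) :=
  insert (qT k m (KE1 k 1) (KE1 k m))
    (insert (qT k m (KE2 k 1) (KE2 k m))
      (insert (qT k m (KC k 1 0) (KE1 k m))
        (Set.range (fun j => qT k m (KE2 k 1) (KC k m j)))))

lemma qT_mem_T4 (a : Kron k 1) (b : Kron k m) :
    qT k m a b ∈ Submodule.span k (T4set k m) := by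
  have ha : a ∈ Submodule.span k (genSet k 1) := by rw [span_genSet_top]; trivial
  have hb : b ∈ Submodule.span k (genSet k m) := by rw [span_genSet_top]; trivial
  induction ha using Submodule.span_induction with
  | mem x hx =>
    induction hb using Submodule.span_induction with
    | mem y hy =>
      rw [mem_genSet_iff] at hx hy
      rcases hx with rfl | rfl | ⟨i, rfl⟩ <;> rcases hy with rfl | rfl | ⟨j, rfl⟩
      · exact Submodule.subset_span (Set.mem_insert _ _)
      · rw [qT_E1_E2]; exact zero_mem _
      · rw [qT_E1_C]; exact zero_mem _
      · rw [qT_E2_E1]; exact zero_mem _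
      · exact Submodule.subset_span
          (Set.mem_insert_of_mem _ (Set.mem_insert _ _))
      · exact Submodule.subset_span
          (Set.mem_insert_of_mem _ (Set.mem_insert_of_mem _ (Set.mem_insert_of_mem _ ⟨j, rfl⟩)))
      · obtain rfl : i = 0 := Subsingleton.elim i 0
        exact Submodule.subset_span
          (Set.mem_insert_of_mem _ (Set.mem_insert_of_mem _ (Set.mem_insert _ _)))
      · rw [qT_C_E2]; exact zero_mem _
      · rw [qT_C_C]; exact zero_mem _
    | zero => rw [qT_zero_right]; exact zero_mem _
    | add y1 y2 _ _ ih1 ih2 => rw [qT_add_right]; exact add_mem ih1 ih2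
    | smul c y _ ih => rw [qT_smul_right]; exact Submodule.smul_mem _ _ ih
  | zero => rw [qT_zero_left]; exact zero_mem _
  | add x1 x2 _ _ ih1 ih2 => rw [qT_add_left]; exact add_mem ih1 ih2
  | smul c x _ ih => rw [qT_smul_left]; exact Submodule.smul_mem _ _ ih

lemma span_T4_top : Submodule.span k (T4set k m) = ⊤ := by
  rw [eq_top_iff, ← spanTC_top k m]
  refine Submodule.span_le.mpr ?_
  rintro z ⟨a, b, rfl⟩
  exact qT_mem_T4 k m a b

lemma psi_E1E1 : psi k m (qT k m (KE1 k 1) (KE1 k m)) = KE1 k (m+1) := by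
  rw [psi_qK, fA_E1, gA_E1, E1_mul_E1]

lemma psi_E2E2 : psi k m (qT k m (KE2 k 1) (KE2 k m)) = KE2 k (m+1) := by
  rw [psi_qK, fA_E2, gA_E2, E2_mul_E2]

lemma psi_CE1 : psi k m (qT k m (KC k 1 0) (KE1 k m)) = KC k (m+1) 0 := by
  rw [psi_qK, fA_C, gA_E1, C_mul_E1]

lemma psi_E2C (j : Fin m) :
    psi k m (qT k m (KE2 k 1) (KC k m j)) = KC k (m+1) j.succ := by
  rw [psi_qK, fA_E2, gA_C, E2_mul_C]

lemma psi_inj : Function.Injective (psi k m) := by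
  rw [← LinearMap.ker_eq_bot, Submodule.eq_bot_iff]
  intro z hz
  rw [LinearMap.mem_ker] at hz
  have hzT : z ∈ Submodule.span k (T4set k m) := by rw [span_T4_top]; trivial
  rw [T4set, Submodule.mem_span_insert] at hzT
  obtain ⟨c1, z1, hz1, rfl⟩ := hzT
  rw [Submodule.mem_span_insert] at hz1
  obtain ⟨c2, z2, hz2, rfl⟩ := hz1
  rw [Submodule.mem_span_insert] at hz2
  obtain ⟨c3, z3, hz3, rfl⟩ := hz2
  rw [Submodule.mem_span_range_iff_exists_fun] at hz3
  obtain ⟨y, rfl⟩ := hz3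
  simp only [map_add, map_smul, map_sum, psi_E1E1, psi_E2E2, psi_CE1, psi_E2C] at hz
  have hind : c1 • KE1 k (m+1) + c2 • KE2 k (m+1)
      + ∑ i, (Fin.cases c3 y : ∀ _ : Fin (m+1), k) i • KC k (m+1) i = 0 := by
    rw [Fin.sum_univ_succ]
    simp only [Fin.cases_zero, Fin.cases_succ]
    calc c1 • KE1 k (m+1) + c2 • KE2 k (m+1) + (c3 • KC k (m+1) 0
          + ∑ i : Fin m, y i • KC k (m+1) i.succ)
        = c1 • KE1 k (m+1) + (c2 • KE2 k (m+1) + (c3 • KC k (m+1) 0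
          + ∑ i : Fin m, y i • KC k (m+1) i.succ)) := by abel
      _ = 0 := hz
  obtain ⟨hc1, hc2, hy⟩ := indep k m c1 c2 _ hind
  have hc3 : c3 = 0 := by have := hy 0; rwa [Fin.cases_zero] at this
  have hyj : ∀ j, y j = 0 := fun j => by have := hy j.succ; rwa [Fin.cases_succ] at this
  rw [hc1, hc2, hc3]
  simp only [zero_smul, zero_add]
  rw [Finset.sum_eq_zero (fun j _ => by rw [hyj j, zero_smul])]

lemma psi_surj : Function.Surjective (psi k m) := by
  rw [← LinearMap.range_eq_top, eq_top_iff, ← span_genSet_top k (m+1)]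
  refine Submodule.span_le.mpr ?_
  rintro x hx
  rcases (mem_genSet_iff k (m+1) x).mp hx with rfl | rfl | ⟨i, rfl⟩
  · exact ⟨qT k m (KE1 k 1) (KE1 k m), psi_E1E1 k m⟩
  · exact ⟨qT k m (KE2 k 1) (KE2 k m), psi_E2E2 k m⟩
  · induction i using Fin.cases with
    | zero => exact ⟨qT k m (KC k 1 0) (KE1 k m), psi_CE1 k m⟩
    | succ j => exact ⟨qT k m (KE2 k 1) (KC k m j), psi_E2C k m j⟩

end Stmt8Aux


namespace Stmt8Aux

attribute [local instance] instRingKron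

variable (k : Type) [Field k] (m : ℕ)
variable (πA : Kron k 1 →ₐ[k] (k × k)) (πB : Kron k m →ₐ[k] (k × k))

lemma psi_mul
    (hπA1 : πA (KE1 k 1) = (1, 0)) (hπA2 : πA (KE2 k 1) = (0, 1))
    (hπA3 : ∀ i, πA (KC k 1 i) = 0)
    (hπB1 : πB (KE1 k m) = (1, 0)) (hπB2 : πB (KE2 k m) = (0, 1))
    (hπB3 : ∀ i, πB (KC k m i) = 0)
    (μ : TC k m →ₗ[k] TC k m →ₗ[k] TC k m)
    (hμ : ∀ (a a' : Kron k 1) (b b' : Kron k m),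
      μ (qT k m a b) (qT k m a' b') =
        qT k m (a * epsS k 1 (πB b) * a') b'
          + qT k m a (b * epsS k m (πA a') * b')
          - qT k m (a * epsS k 1 (πB b)) (epsS k m (πA a') * b'))
    (u v : TC k m) : psi k m (μ u v) = psi k m u * psi k m v := by
  have key : μ.compr₂ (psi k m)
      = (LinearMap.mul k (Kron k (m+1))).compl₁₂ (psi k m) (psi k m) := by
    apply LinearMap.ext_on (spanTC_top k m)
    intro u hu
    apply LinearMap.ext_on (spanTC_top k m)
    intro v hv
    obtain ⟨a, b, rfl⟩ := hu
    obtain ⟨a', b', rfl⟩ := hv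
    simp only [LinearMap.compr₂_apply, LinearMap.compl₁₂_apply, LinearMap.mul_apply']
    rw [hμ, map_sub, map_add, psi_qK, psi_qK, psi_qK, psi_qK, psi_qK]
    rw [map_mul, map_mul, map_mul, map_mul, map_mul, fA_eps, gA_eps]
    have hc := comm k m πA πB hπA1 hπA2 hπA3 hπB1 hπB2 hπB3 b a'
    rw [show fA k m a * gA k m b * (fA k m a' * gA k m b')
        = fA k m a * (gA k m b * fA k m a') * gA k m b' from by noncomm_ring, hc]
    simp only [mul_add, add_mul, mul_sub, sub_mul, mul_assoc]
  have h1 := congrFun (congrArg (fun F => (DFunLike.coe F : TC k m → _)) key) u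
  have h2 := congrFun (congrArg (fun F => (DFunLike.coe F : TC k m → _)) h1) v
  simpa only [LinearMap.compr₂_apply, LinearMap.compl₁₂_apply, LinearMap.mul_apply'] using h2

lemma mainAux
    (hπA1 : πA (KE1 k 1) = (1, 0)) (hπA2 : πA (KE2 k 1) = (0, 1))
    (hπA3 : ∀ i, πA (KC k 1 i) = 0)
    (hπB1 : πB (KE1 k m) = (1, 0)) (hπB2 : πB (KE2 k m) = (0, 1))
    (hπB3 : ∀ i, πB (KC k m i) = 0)
    (μ : TC k m →ₗ[k] TC k m →ₗ[k] TC k m)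
    (hμ : ∀ (a a' : Kron k 1) (b b' : Kron k m),
      μ (qT k m a b) (qT k m a' b') =
        qT k m (a * epsS k 1 (πB b) * a') b'
          + qT k m a (b * epsS k m (πA a') * b')
          - qT k m (a * epsS k 1 (πB b)) (epsS k m (πA a') * b')) :
    ∃ e : Kron k (m+1) ≃ₗ[k] TC k m,
      e 1 = qT k m 1 1 ∧ ∀ x y : Kron k (m+1), e (x * y) = μ (e x) (e y) := by
  have hbij : Function.Bijective (psi k m) := ⟨psi_inj k m, psi_surj k m⟩
  set E := LinearEquiv.ofBijective (psi k m) hbij with hE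
  have hEapp : ∀ z, E z = psi k m z := fun z => rfl
  refine ⟨E.symm, ?_, ?_⟩
  · rw [LinearEquiv.symm_apply_eq, hEapp, psi_qK, map_one, map_one, one_mul]
  · intro x y
    rw [LinearEquiv.symm_apply_eq, hEapp,
      psi_mul k m πA πB hπA1 hπA2 hπA3 hπB1 hπB2 hπB3 μ hμ]
    rw [← hEapp, ← hEapp, LinearEquiv.apply_symm_apply, LinearEquiv.apply_symm_apply]

end Stmt8Aux

/-- `K_n ≅ K₁ ⊗_S^v K_{n−1}` over `S = k × k`, where `v` is the twisting map
`v(b ⊗ a) = ε(π'(b))·a ⊗ 1 + 1 ⊗ b·ε'(π(a)) − ε(π'(b)) ⊗ ε'(π(a))` built from the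
natural augmentations `π : K₁ → S` and `π' : K_{n−1} → S` killing the arrows:
for the multiplication `μ_v` on `K₁ ⊗_S K_{n−1}` induced by `v`, there is a `k`-linear
bijection `e : K_n → K₁ ⊗_S K_{n−1}` with `e 1 = 1 ⊗ 1` carrying the multiplication
of `K_n` to `μ_v`. -/
theorem stmt_8 (k : Type) [Field k] (n : ℕ) (hn : 1 ≤ n)
    (πA : Kron k 1 →ₐ[k] (k × k))
    (hπA1 : πA (qE1 k 1 0 (emptyFam k 1) (emptyFam k 1)) = (1, 0))
    (hπA2 : πA (qE2 k 1 0 (emptyFam k 1) (emptyFam k 1)) = (0, 1))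
    (hπA3 : ∀ i, πA (qC k 1 0 (emptyFam k 1) (emptyFam k 1) i) = 0)
    (πB : Kron k (n - 1) →ₐ[k] (k × k))
    (hπB1 : πB (qE1 k (n-1) 0 (emptyFam k (n-1)) (emptyFam k (n-1))) = (1, 0))
    (hπB2 : πB (qE2 k (n-1) 0 (emptyFam k (n-1)) (emptyFam k (n-1))) = (0, 1))
    (hπB3 : ∀ i, πB (qC k (n-1) 0 (emptyFam k (n-1)) (emptyFam k (n-1)) i) = 0)
    (μ : TKron k n →ₗ[k] TKron k n →ₗ[k] TKron k n)
    (hμ : ∀ (a a' : Kron k 1) (b b' : Kron k (n - 1)),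
      μ (qK k n a b) (qK k n a' b') =
        qK k n (a * epsS k 1 (πB b) * a') b'
          + qK k n a (b * epsS k (n - 1) (πA a') * b')
          - qK k n (a * epsS k 1 (πB b)) (epsS k (n - 1) (πA a') * b')) :
    ∃ e : Kron k n ≃ₗ[k] TKron k n,
      e 1 = qK k n 1 1 ∧ ∀ x y : Kron k n, e (x * y) = μ (e x) (e y) := by
  obtain ⟨m, rfl⟩ : ∃ m, n = m + 1 := ⟨n - 1, by omega⟩
  exact Stmt8Aux.mainAux k m πA πB hπA1 hπA2 hπA3 hπB1 hπB2 hπB3 μ hμ
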